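/- Let A and A' be as follows: A' is the integral closure of a complete one-dimensional local Noetherian domain A over a field k of characteristic zero, so A' is a complete DVR with maximal ideal m' and uniformizer t. Let ∂ be a p-derivation of K(A) with p ≥ 2 (skew-symmetric p-linear over k, satisfying the Leibniz rule in each argument) such that ∂(A,…,A) ⊆ A and ∂(a,x₂,…,x_p) ∈ A' for all a ∈ A and x₂,…,x_p ∈ A'. If x₁ is an element of a coefficient field k_{A'} ⊆ A' that is finite and separable over a coefficient field k_A ⊆ A, and x₂,…,x_p ∈ k_{A'} ∪ {t}, then ∂(x₁,…,x_p) ∈ A'. -/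

import Mathlib

/-!
STATEMENT 3 (Induction step in the proof of the lifting proposition).
`A` is a complete one-dimensional local Noetherian domain over a field `k` of
characteristic zero, `A'` its integral closure in `K = K(A)` — a complete DVR with
uniformizer `t`.  `∂` is a `p`-derivation (`p ≥ 2`) of `K` over `k` (formalized via a
`K`-linear map `D : Λ^p Ω_{K/k} → K`, so that `∂(x₁,…,x_p) = D(dx₁ ∧ ⋯ ∧ dx_p)` is
automatically skew-symmetric, `p`-linear over `k` and satisfies the Leibniz rule in each
argument), such that `∂(A,…,A) ⊆ A` and `∂(a,x₂,…,x_p) ∈ A'` for `a ∈ A`,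
`x₂,…,x_p ∈ A'`.  If `x₁` lies in a coefficient field `k_{A'} ⊆ A'` which is finite and
separable over a coefficient field `k_A ⊆ A`, and `x₂,…,x_p ∈ k_{A'} ∪ {t}`, then
`∂(x₁,…,x_p) ∈ A'`.
-/



open Polynomial in
lemma d_eval_aux {kk KK M : Type*} [CommRing kk] [CommRing KK] [Algebra kk KK]
    [AddCommGroup M] [Module KK M] [Module kk M] [IsScalarTower kk KK M] (d : Derivation kk KK M) (P : KK[X]) (x : KK) :
    d (P.eval x) = (derivative P).eval x • d x + ∑ i ∈ P.support, x ^ i • d (P.coeff i) := by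
  have h1 : P.eval x = ∑ i ∈ P.support, P.coeff i * x ^ i := by rw [eval_eq_sum, sum_def]
  have h2 : ∀ i ∈ P.support, d (P.coeff i * x ^ i)
      = (P.coeff i * i * x ^ (i - 1)) • d x + x ^ i • d (P.coeff i) := by
    intro i _
    rw [d.leibniz, d.leibniz_pow, ← Nat.cast_smul_eq_nsmul KK, smul_smul, smul_smul, mul_assoc]
  have h3 : (derivative P).eval x = ∑ i ∈ P.support, P.coeff i * i * x ^ (i - 1) := by
    rw [derivative_apply, sum_def, eval_finset_sum]
    simp [mul_assoc]
  rw [h1, map_sum, Finset.sum_congr rfl h2, Finset.sum_add_distrib, h3, Finset.sum_smul]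

lemma eval_mem_subfield {K : Type*} [Field K] (S : Subfield K) {P : Polynomial K}
    (h : ∀ n, P.coeff n ∈ S) {x : K} (hx : x ∈ S) : P.eval x ∈ S := by
  rw [Polynomial.eval_eq_sum_range]
  exact sum_mem fun i _ => mul_mem (h i) (pow_mem hx i)

/-- dx₁ ∧ ⋯ ∧ dx_p in the `p`-th exterior power of Kähler differentials. -/
noncomputable def wedgeDiff (k A : Type) [CommRing k] [CommRing A] [Algebra k A]
    (p : ℕ) (a : Fin p → A) : ⋀[A]^p (Ω[A⁄k]) :=
  ⟨ExteriorAlgebra.ιMulti A p (fun i => KaehlerDifferential.D k A (a i)),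
   ExteriorAlgebra.ιMulti_range A p (Set.mem_range_self _)⟩

theorem statement3
    (k : Type) [Field k] [CharZero k]
    (A : Type) [CommRing A] [IsDomain A] [IsLocalRing A] [IsNoetherianRing A] [Algebra k A]
    -- `A` is one-dimensional and complete
    (hdim : Ring.DimensionLEOne A) (hnotfield : ¬ IsField A)
    [IsAdicComplete (IsLocalRing.maximalIdeal A) A]
    (K : Type) [Field K] [Algebra A K] [IsFractionRing A K]
    [Algebra k K] [IsScalarTower k A K]
    -- the integral closure `A'` of `A` in `K` is a (complete) DVR
    (hDVR : IsDiscreteValuationRing (integralClosure A K))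
    -- `t` is a uniformizer of `A'`
    (t : K) (ht : t ∈ integralClosure A K)
    (htu : Irreducible (⟨t, ht⟩ : integralClosure A K))
    -- coefficient fields `k_A ⊆ A` and `k_{A'} ⊆ A'` with `k_A ⊆ k_{A'}`
    (kA kA' : Subfield K)
    (hkA : (kA : Set K) ⊆ Set.range (algebraMap A K))
    (hkA' : (kA' : Set K) ⊆ (integralClosure A K : Set K))
    (hle : kA ≤ kA')
    -- `k_{A'}` is finite and separable over `k_A`: every element of `k_{A'}` is a simple
    -- root of a polynomial with coefficients in `k_A`
    (hsep : ∀ x ∈ kA', ∃ P : Polynomial K, (∀ n, P.coeff n ∈ kA) ∧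
      P.eval x = 0 ∧ (Polynomial.derivative P).eval x ≠ 0)
    (p : ℕ) (hp : 2 ≤ p)
    -- the `p`-derivation `∂` of `K` over `k`
    (D : ⋀[K]^p (Ω[K⁄k]) →ₗ[K] K)
    -- `∂(A,…,A) ⊆ A`
    (hDA : ∀ x : Fin p → K, (∀ i, x i ∈ Set.range (algebraMap A K)) →
      D (wedgeDiff k K p x) ∈ Set.range (algebraMap A K))
    -- `∂(a, x₂,…,x_p) ∈ A'` for `a ∈ A` and `x₂,…,x_p ∈ A'`
    (hDA' : ∀ x : Fin p → K, (∀ i : Fin p, (i : ℕ) = 0 → x i ∈ Set.range (algebraMap A K)) →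
      (∀ i : Fin p, (i : ℕ) ≠ 0 → x i ∈ integralClosure A K) →
      D (wedgeDiff k K p x) ∈ integralClosure A K) :
    ∀ x : Fin p → K, (∀ i : Fin p, (i : ℕ) = 0 → x i ∈ kA') →
      (∀ i : Fin p, (i : ℕ) ≠ 0 → x i ∈ kA' ∨ x i = t) →
      D (wedgeDiff k K p x) ∈ integralClosure A K := by
  classical
  haveI : NeZero p := ⟨by omega⟩
  intro x hx0 hx1
  have h0 : x 0 ∈ kA' := hx0 0 (by simp)
  obtain ⟨P, hPc, hPe, hPd⟩ := hsep (x 0) h0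
  set d := KaehlerDifferential.D k K with hd
  set c : K := (Polynomial.derivative P).eval (x 0) with hc
  set y : ℕ → Fin p → K := fun i => Function.update x 0 (P.coeff i) with hy
  set v : Fin p → Ω[K⁄k] := fun j => d (x j) with hv
  set f := ExteriorAlgebra.ιMulti K p (M := Ω[K⁄k]) with hf
  have hvy : ∀ i : ℕ, (fun j => d (y i j)) = Function.update v 0 (d (P.coeff i)) := by
    intro i; funext j
    by_cases hj : j = 0 <;> simp [hy, hv, hj, Function.update]
  -- the key identity in the exterior power
  have key : c • wedgeDiff k K p x
      + ∑ i ∈ P.support, (x 0) ^ i • wedgeDiff k K p (y i) = 0 := by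
    apply Subtype.coe_injective
    simp only [Submodule.coe_add, SetLike.val_smul, ZeroMemClass.coe_zero,
      AddSubmonoidClass.coe_finset_sum]
    have hwx : ((wedgeDiff k K p x : ⋀[K]^p (Ω[K⁄k])) : ExteriorAlgebra K (Ω[K⁄k])) = f v := rfl
    have hwy : ∀ i : ℕ, ((wedgeDiff k K p (y i) : ⋀[K]^p (Ω[K⁄k])) :
        ExteriorAlgebra K (Ω[K⁄k])) = f (Function.update v 0 (d (P.coeff i))) := by
      intro i
      show f (fun j => d (y i j)) = _
      rw [hvy i]
    rw [hwx]
    rw [Finset.sum_congr rfl (fun i _ => by rw [hwy i])]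
    have e1 : c • f v = f (Function.update v 0 (c • d (x 0))) := by
      rw [AlternatingMap.map_update_smul]
      exact congrArg (c • ·) (congrArg f (Function.update_eq_self 0 v)).symm
    have e2 : ∑ i ∈ P.support, (x 0) ^ i • f (Function.update v 0 (d (P.coeff i)))
        = f (Function.update v 0 (∑ i ∈ P.support, (x 0) ^ i • d (P.coeff i))) :=
      calc ∑ i ∈ P.support, (x 0) ^ i • f (Function.update v 0 (d (P.coeff i)))
          = ∑ i ∈ P.support, f (Function.update v 0 ((x 0) ^ i • d (P.coeff i))) :=
            Finset.sum_congr rfl fun i _ => (AlternatingMap.map_update_smul f v 0 _ _).symm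
        _ = f (Function.update v 0 (∑ i ∈ P.support, (x 0) ^ i • d (P.coeff i))) :=
            (f.toMultilinearMap.map_update_sum P.support 0 _ v).symm
    rw [e1, e2, ← AlternatingMap.map_update_add]
    have : c • d (x 0) + ∑ i ∈ P.support, (x 0) ^ i • d (P.coeff i) = 0 := by
      rw [← d_eval_aux d P (x 0), hPe]
      simp
    rw [this, AlternatingMap.map_update_zero]
  -- apply D to the key identity
  have key2 : c * D (wedgeDiff k K p x)
      + ∑ i ∈ P.support, (x 0) ^ i * D (wedgeDiff k K p (y i)) = 0 := by
    have := congrArg D key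
    simpa [map_add, map_sum, map_smul, smul_eq_mul] using this
  have hcmem : c ∈ kA' := by
    apply eval_mem_subfield kA' _ h0
    intro n
    rw [Polynomial.coeff_derivative]
    exact mul_mem (hle (hPc (n + 1))) (by push_cast; exact add_mem (natCast_mem kA' n) (one_mem kA'))
  have hS : ∑ i ∈ P.support, (x 0) ^ i * D (wedgeDiff k K p (y i)) ∈ integralClosure A K := by
    apply sum_mem
    intro i _
    apply mul_mem (pow_mem (hkA' h0) i)
    apply hDA' (y i)
    · intro j hj
      have : j = 0 := Fin.ext hj
      subst this
      simp only [hy, Function.update_self]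
      exact hkA (hPc i)
    · intro j hj
      have hj0 : j ≠ 0 := fun h => hj (by rw [h]; simp)
      simp only [hy, Function.update_of_ne hj0]
      rcases hx1 j hj with h | h
      · exact hkA' h
      · rw [h]; exact ht
  have hDx : D (wedgeDiff k K p x)
      = c⁻¹ * (-(∑ i ∈ P.support, (x 0) ^ i * D (wedgeDiff k K p (y i)))) := by
    field_simp
    linear_combination key2
  rw [hDx]
  exact mul_mem (hkA' (Subfield.inv_mem kA' hcmem)) (neg_mem hS)
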